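/- Let d ≥ 1, m ≥ 2, and r be integers with 2 ≤ 2r ≤ m−1. For every skew-symmetric matrix polynomial Q ∈ POLss_{d,m×m} with rank 2r₁, where r₁ < r, there exists a sequence (P^{(k)})_{k∈ℕ} of skew-symmetric matrix polynomials in POLss_{d,m×m} such that every P^{(k)} has rank exactly 2r and P^{(k)} converges to Q (coefficient-wise) as k → ∞. -/

import Mathlib

open Matrix

noncomputable section

abbrev Mat (n : ℕ) := Matrix (Fin n) (Fin n) ℂ

/-- The matrix `X·A − B` over the field of rational functions `ℂ(X)`. -/
def pencilRatMat {ι : Type} [Fintype ι] (A B : Matrix ι ι ℂ) :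
    Matrix ι ι (RatFunc ℂ) :=
  Matrix.of fun i j =>
    RatFunc.X * algebraMap ℂ (RatFunc ℂ) (A i j) - algebraMap ℂ (RatFunc ℂ) (B i j)

/-- The normal rank of the pencil `λA − B`. -/
def pencilRank {ι : Type} [Fintype ι] (A B : Matrix ι ι ℂ) : ℕ :=
  (pencilRatMat A B).rank

/-- `G_k`: the `k×(k+1)` matrix with ones on the main diagonal. -/
def Gmat (k : ℕ) : Matrix (Fin k) (Fin (k+1)) ℂ :=
  Matrix.of fun i j => if (j : ℕ) = (i : ℕ) then 1 else 0

/-- `F_k`: the `k×(k+1)` matrix with ones on the superdiagonal. -/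
def Fmat (k : ℕ) : Matrix (Fin k) (Fin (k+1)) ℂ :=
  Matrix.of fun i j => if (j : ℕ) = (i : ℕ) + 1 then 1 else 0

/-- `J_k(0)`: the `k×k` nilpotent Jordan block. -/
def Jnil (k : ℕ) : Matrix (Fin k) (Fin k) ℂ :=
  Matrix.of fun i j => if (j : ℕ) = (i : ℕ) + 1 then 1 else 0

/-- λ-coefficient of the canonical block `M_k`. -/
def MAm (k : ℕ) : Matrix (Fin k ⊕ Fin (k+1)) (Fin k ⊕ Fin (k+1)) ℂ :=
  Matrix.fromBlocks 0 (Gmat k) (-(Gmat k)ᵀ) 0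

/-- constant coefficient of the canonical block `M_k`. -/
def MBm (k : ℕ) : Matrix (Fin k ⊕ Fin (k+1)) (Fin k ⊕ Fin (k+1)) ℂ :=
  Matrix.fromBlocks 0 (Fmat k) (-(Fmat k)ᵀ) 0

/-- λ-coefficient of the canonical block `K_k`. -/
def KAm (k : ℕ) : Matrix (Fin k ⊕ Fin k) (Fin k ⊕ Fin k) ℂ :=
  Matrix.fromBlocks 0 (Jnil k) (-(Jnil k)ᵀ) 0

/-- constant coefficient of the canonical block `K_k`. -/
def KBm (k : ℕ) : Matrix (Fin k ⊕ Fin k) (Fin k ⊕ Fin k) ℂ :=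
  Matrix.fromBlocks 0 1 (-1) 0

/-- Index type for the block-diagonal pencil `𝒲`:
`s` copies of `M_{α+1}`, `t` copies of `M_α`, `r` copies of `K_1`. -/
abbrev WIdx (s t r : ℕ) : Type := (Fin s ⊕ Fin t) ⊕ Fin r

/-- Sizes of the diagonal blocks of `𝒲`. -/
def WSize (α : ℕ) {s t r : ℕ} : WIdx s t r → ℕ
  | Sum.inl (Sum.inl _) => (α + 1) + (α + 1 + 1)
  | Sum.inl (Sum.inr _) => α + (α + 1)
  | Sum.inr _ => 1 + 1

/-- Diagonal blocks of the λ-coefficient of `𝒲`. -/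
def WBlkA (α : ℕ) {s t r : ℕ} :
    (i : WIdx s t r) → Matrix (Fin (WSize α i)) (Fin (WSize α i)) ℂ
  | Sum.inl (Sum.inl _) => Matrix.reindex finSumFinEquiv finSumFinEquiv (MAm (α + 1))
  | Sum.inl (Sum.inr _) => Matrix.reindex finSumFinEquiv finSumFinEquiv (MAm α)
  | Sum.inr _ => Matrix.reindex finSumFinEquiv finSumFinEquiv (KAm 1)

/-- Diagonal blocks of the constant coefficient of `𝒲`. -/
def WBlkB (α : ℕ) {s t r : ℕ} :
    (i : WIdx s t r) → Matrix (Fin (WSize α i)) (Fin (WSize α i)) ℂ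
  | Sum.inl (Sum.inl _) => Matrix.reindex finSumFinEquiv finSumFinEquiv (MBm (α + 1))
  | Sum.inl (Sum.inr _) => Matrix.reindex finSumFinEquiv finSumFinEquiv (MBm α)
  | Sum.inr _ => Matrix.reindex finSumFinEquiv finSumFinEquiv (KBm 1)

/-- λ-coefficient of `𝒲 = diag(M_{α+1}×s, M_α×t, K_1×r)`, reindexed to `Fin n`. -/
def WpencilA (α : ℕ) {s t r n : ℕ}
    (e : (Σ i : WIdx s t r, Fin (WSize α i)) ≃ Fin n) : Mat n :=
  Matrix.reindex e e (Matrix.blockDiagonal' (WBlkA α))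

/-- constant coefficient of `𝒲`, reindexed to `Fin n`. -/
def WpencilB (α : ℕ) {s t r n : ℕ}
    (e : (Σ i : WIdx s t r, Fin (WSize α i)) ≃ Fin n) : Mat n :=
  Matrix.reindex e e (Matrix.blockDiagonal' (WBlkB α))

/-- Congruence orbit of a pencil `(A,B)`, identified with pairs of matrices. -/
def congOrbit {n : ℕ} (W : Mat n × Mat n) : Set (Mat n × Mat n) :=
  {p | ∃ S : Mat n, IsUnit S ∧ p = (Sᵀ * W.1 * S, Sᵀ * W.2 * S)}

end

noncomputable section

/-- The matrix polynomial `Σ_{k=0}^{d} X^k·(P k)` viewed over the field `ℂ(X)`. -/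
def polyRatMat {m d : ℕ} (P : Fin (d + 1) → Mat m) :
    Matrix (Fin m) (Fin m) (RatFunc ℂ) :=
  Matrix.of fun i j =>
    ∑ k : Fin (d + 1), algebraMap ℂ (RatFunc ℂ) (P k i j) * RatFunc.X ^ (k : ℕ)

/-- The (normal) rank of a matrix polynomial, given by its coefficients, over `ℂ(X)`. -/
def polyRank {m d : ℕ} (P : Fin (d + 1) → Mat m) : ℕ :=
  (polyRatMat P).rank

/-- λ-coefficient of the skew-symmetric linearization `F_P` of a skew-symmetric matrix
polynomial of odd grade `g` with coefficients `P 0, …, P g` (block entry `(k,l)` is the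
`(k+1,l+1)` block in the 1-based description). -/
def linA (m g : ℕ) (P : Fin (g + 1) → Mat m) :
    Matrix (Fin g × Fin m) (Fin g × Fin m) ℂ :=
  Matrix.of fun p q =>
    if p.1 = q.1 then
      (if (p.1 : ℕ) % 2 = 0 then
        P ⟨g - (p.1 : ℕ), Nat.lt_succ_of_le (Nat.sub_le g _)⟩ p.2 q.2
      else 0)
    else if (q.1 : ℕ) = (p.1 : ℕ) + 1 ∧ (p.1 : ℕ) % 2 = 1 then -((1 : Mat m) p.2 q.2)
    else if (p.1 : ℕ) = (q.1 : ℕ) + 1 ∧ (q.1 : ℕ) % 2 = 1 then (1 : Mat m) p.2 q.2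
    else 0

/-- Constant coefficient of the skew-symmetric linearization `F_P`. -/
def linB (m g : ℕ) (P : Fin (g + 1) → Mat m) :
    Matrix (Fin g × Fin m) (Fin g × Fin m) ℂ :=
  Matrix.of fun p q =>
    if p.1 = q.1 then
      (if (p.1 : ℕ) % 2 = 0 then
        -(P ⟨g - ((p.1 : ℕ) + 1), Nat.lt_succ_of_le (Nat.sub_le g _)⟩ p.2 q.2)
      else 0)
    else if (q.1 : ℕ) = (p.1 : ℕ) + 1 ∧ (p.1 : ℕ) % 2 = 0 then (1 : Mat m) p.2 q.2
    else if (p.1 : ℕ) = (q.1 : ℕ) + 1 ∧ (q.1 : ℕ) % 2 = 0 then -((1 : Mat m) p.2 q.2)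
    else 0

/-- A polynomial of grade `d` regarded as a polynomial of grade `d+1`
(with zero coefficient of `λ^{d+1}`). -/
def extendPoly {m d : ℕ} (Q : Fin (d + 1) → Mat m) : Fin (d + 2) → Mat m :=
  fun k => if h : (k : ℕ) < d + 1 then Q ⟨k, h⟩ else 0

end

noncomputable section RankApproxAux

open Matrix Module Submodule

variable {K : Type*} [Field K]

lemma toDualPi_apply {m : ℕ} (x w : Fin m → K) :
    (Pi.basisFun K (Fin m)).toDual x w = ∑ i, w i * x i := by
  classical
  conv_lhs => rw [← (Pi.basisFun K (Fin m)).sum_repr w]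
  rw [map_sum]
  refine Finset.sum_congr rfl fun i _ => ?_
  rw [_root_.map_smul, Basis.toDual_apply_left, Pi.basisFun_repr, Pi.basisFun_repr, smul_eq_mul]

lemma skew_ker_eq_comap {m : ℕ} (A : Matrix (Fin m) (Fin m) K) (hA : Aᵀ = -A) :
    LinearMap.ker A.mulVecLin =
      Submodule.comap
        ((Pi.basisFun K (Fin m)).toDualEquiv :
          (Fin m → K) ≃ₗ[K] Module.Dual K (Fin m → K)).toLinearMap
        (LinearMap.range A.mulVecLin).dualAnnihilator := by
  classical
  have key : ∀ x y : Fin m → K,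
      (Pi.basisFun K (Fin m)).toDualEquiv x (A.mulVec y) = -((A.mulVec x) ⬝ᵥ y) := by
    intro x y
    rw [Basis.toDualEquiv_apply, toDualPi_apply,
      show (∑ i, (A *ᵥ y) i * x i) = (A *ᵥ y) ⬝ᵥ x from rfl,
      dotProduct_comm, dotProduct_mulVec, ← mulVec_transpose, hA, neg_mulVec, neg_dotProduct]
  ext x
  simp only [LinearMap.mem_ker, Submodule.mem_comap, LinearEquiv.coe_coe,
    Submodule.mem_dualAnnihilator, LinearMap.mem_range, mulVecLin_apply,
    forall_exists_index]
  constructor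
  · intro hx w y hy
    subst hy
    rw [key, hx]
    simp
  · intro h
    funext e
    have h2 := h (A.mulVec (Pi.single e 1)) (Pi.single e 1) rfl
    rw [key] at h2
    have h3 : (A *ᵥ x) ⬝ᵥ Pi.single e 1 = 0 := by
      have := neg_eq_zero.mp h2
      exact this
    rw [dotProduct_single, mul_one] at h3
    exact h3

lemma exists_indep_singles {m n : ℕ} (R : Submodule K (Fin m → K))
    (h : n + finrank K R ≤ m) :
    ∃ ι : Fin n → Fin m, Function.Injective ι ∧
      LinearIndependent K (fun j : Fin n => R.mkQ (Pi.single (ι j) (1 : K))) := by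
  classical
  set f : Fin m → ((Fin m → K) ⧸ R) := fun j => R.mkQ (Pi.single j (1 : K)) with hf
  have hsingle : (fun j : Fin m => Pi.single j (1 : K)) = ⇑(Pi.basisFun K (Fin m)) :=
    funext fun j => (Pi.basisFun_apply K (Fin m) j).symm
  have hspan : Submodule.span K (Set.range f) = ⊤ := by
    have h1 : Submodule.span K (Set.range fun j : Fin m => Pi.single j (1 : K)) = ⊤ := by
      rw [hsingle]; exact (Pi.basisFun K (Fin m)).span_eq
    have h2 : Set.range f = R.mkQ '' (Set.range fun j : Fin m => Pi.single j (1 : K)) := by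
      rw [← Set.range_comp]; rfl
    rw [h2, Submodule.span_image, h1, Submodule.map_top, Submodule.range_mkQ]
  obtain ⟨t, hts, htspan, htli⟩ := exists_linearIndependent K (Set.range f)
  have htfin : t.Finite := htli.setFinite
  haveI := htfin.fintype
  have hB : Finset.univ.card = Fintype.card t := rfl
  let B : Basis t K ((Fin m → K) ⧸ R) :=
    Basis.mk htli (by rw [Subtype.range_coe, htspan, hspan])
  have hfr : finrank K ((Fin m → K) ⧸ R) = Fintype.card t :=
    Module.finrank_eq_card_basis B
  have hq := Submodule.finrank_quotient_add_finrank R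
  have hV : finrank K (Fin m → K) = m := by
    rw [Module.finrank_pi, Fintype.card_fin]
  have hcard : n ≤ Fintype.card t := by omega
  obtain ⟨g⟩ : Nonempty (Fin n ↪ t) :=
    Function.Embedding.nonempty_of_card_le (by simpa using hcard)
  have hex : ∀ s : t, ∃ j : Fin m, f j = (s : (Fin m → K) ⧸ R) := fun s => hts s.2
  choose pick hpick using hex
  refine ⟨fun j => pick (g j), ?_, ?_⟩
  · intro j1 j2 hj
    apply g.injective
    apply Subtype.ext
    rw [← hpick (g j1), ← hpick (g j2)]
    exact congrArg f hj
  · have heq : (fun j : Fin n => R.mkQ (Pi.single (pick (g j)) (1 : K)))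
        = (Subtype.val ∘ g) := funext fun j => hpick (g j)
    rw [heq]
    exact htli.comp g g.injective

lemma supported_eq_sum {m n : ℕ} (ι : Fin n → Fin m) (hι : Function.Injective ι)
    (v : Fin m → K) (hv : ∀ e, (∀ j, e ≠ ι j) → v e = 0) :
    v = ∑ j, v (ι j) • (Pi.single (ι j) (1 : K) : Fin m → K) := by
  classical
  funext e
  rw [Finset.sum_apply]
  by_cases he : ∃ j, e = ι j
  · obtain ⟨j0, rfl⟩ := he
    rw [Finset.sum_eq_single j0]
    · simp
    · intro j _ hj
      have : ι j0 ≠ ι j := fun hh => hj (hι hh.symm)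
      simp [Pi.single_apply, this]
    · simp
  · push_neg at he
    rw [hv e he]
    symm
    apply Finset.sum_eq_zero
    intro j _
    simp [Pi.single_apply, he j]

end RankApproxAux

noncomputable section

set_option maxHeartbeats 2000000
set_option synthInstance.maxHeartbeats 1000000

open Module Submodule

/-- **Lemma `srank`.**
For `d ≥ 1`, `m ≥ 2`, `2 ≤ 2r ≤ m−1`: every skew-symmetric matrix polynomial
`Q ∈ POLss_{d,m×m}` of rank `2r₁` with `r₁ < r` is the coefficient-wise limit of a
sequence of skew-symmetric matrix polynomials in `POLss_{d,m×m}` of rank exactly `2r`. -/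
theorem skewsymmetric_poly_rank_approximation
    (d m r r₁ : ℕ) (hd : 1 ≤ d) (hm : 2 ≤ m) (hr : 2 ≤ 2 * r) (hrm : 2 * r ≤ m - 1)
    (Q : Fin (d + 1) → Mat m) (hQss : ∀ k, (Q k)ᵀ = -(Q k))
    (hQrank : polyRank Q = 2 * r₁) (hr₁ : r₁ < r) :
    ∃ P : ℕ → (Fin (d + 1) → Mat m),
      (∀ k, ∀ i, ((P k) i)ᵀ = -((P k) i)) ∧
      (∀ k, polyRank (P k) = 2 * r) ∧
      Filter.Tendsto P Filter.atTop (nhds Q) := by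
  classical
  set c := r - r₁ with hcdef
  have hrc : r = r₁ + c := by omega
  set A : Matrix (Fin m) (Fin m) (RatFunc ℂ) := polyRatMat Q with hAdef
  -- skewness of A
  have hAskew : Aᵀ = -A := by
    ext i j
    simp only [transpose_apply, Matrix.neg_apply, hAdef, polyRatMat, of_apply]
    rw [← Finset.sum_neg_distrib]
    refine Finset.sum_congr rfl fun k _ => ?_
    have hq : Q k j i = -(Q k i j) := by
      have := congrFun (congrFun (hQss k) i) j
      simpa [transpose_apply] using this
    rw [hq, map_neg, neg_mul]
  -- rank of A
  have hA_rk : finrank (RatFunc ℂ) (LinearMap.range A.mulVecLin) = 2 * r₁ := hQrank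
  have hV : finrank (RatFunc ℂ) (Fin m → (RatFunc ℂ)) = m := by
    rw [Module.finrank_pi, Fintype.card_fin]
  -- choose the index injection
  obtain ⟨ι, hι, hindep⟩ := exists_indep_singles (K := RatFunc ℂ)
    (LinearMap.range A.mulVecLin) (n := c + c) (by omega)
  set a : Fin c → Fin m := fun i => ι (Fin.castAdd c i) with hadef
  set b : Fin c → Fin m := fun i => ι (Fin.addNat i c) with hbdef
  have hane : ∀ i j : Fin c, a i ≠ b j := by
    intro i j hcontra
    have hv := congrArg Fin.val (hι hcontra)
    simp only [Fin.coe_castAdd, Fin.coe_addNat] at hv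
    omega
  have hainj : Function.Injective a := by
    intro i j hij
    have hv := congrArg Fin.val (hι hij)
    simp only [Fin.coe_castAdd] at hv
    exact Fin.ext hv
  have hbinj : Function.Injective b := by
    intro i j hij
    have hv := congrArg Fin.val (hι hij)
    simp only [Fin.coe_addNat] at hv
    exact Fin.ext (by omega)
  -- the perturbation matrix over ℂ
  set E0 : Mat m := Matrix.of fun x y =>
    ∑ i : Fin c, ((if x = a i ∧ y = b i then (1:ℂ) else 0)
      - (if x = b i ∧ y = a i then (1:ℂ) else 0)) with hE0def
  have hE0skew : E0ᵀ = -E0 := by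
    ext x y
    simp only [transpose_apply, Matrix.neg_apply, hE0def, of_apply]
    rw [← Finset.sum_neg_distrib]
    refine Finset.sum_congr rfl fun i _ => ?_
    rw [neg_sub]
    congr 1
    · exact if_congr (and_comm) rfl rfl
    · exact if_congr (and_comm) rfl rfl
  set EK : Matrix (Fin m) (Fin m) (RatFunc ℂ) := E0.map (algebraMap ℂ (RatFunc ℂ)) with hEKdef
  have hEKentry : ∀ u v, EK u v =
      ∑ i : Fin c, ((if u = a i ∧ v = b i then (1:(RatFunc ℂ)) else 0)
        - (if u = b i ∧ v = a i then (1:(RatFunc ℂ)) else 0)) := by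
    intro u v
    simp only [hEKdef, Matrix.map_apply, hE0def, of_apply, map_sum, map_sub]
    refine Finset.sum_congr rfl fun i _ => ?_
    rw [apply_ite (algebraMap ℂ (RatFunc ℂ)), apply_ite (algebraMap ℂ (RatFunc ℂ)), _root_.map_one, _root_.map_zero]
  have hEKskew : EKᵀ = -EK := by
    ext x y
    have := congrFun (congrFun hE0skew x) y
    simp only [transpose_apply, Matrix.neg_apply] at this ⊢
    simp only [hEKdef, Matrix.map_apply, this, map_neg]
  -- mulVec formula
  have hEK : ∀ (x : Fin m → (RatFunc ℂ)) (e : Fin m),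
      (EK *ᵥ x) e = ∑ i : Fin c,
        ((if e = a i then x (b i) else 0) - (if e = b i then x (a i) else 0)) := by
    intro x e
    show (∑ y, EK e y * x y) = _
    calc (∑ y, EK e y * x y)
        = ∑ y, ∑ i : Fin c, ((if e = a i ∧ y = b i then (1:(RatFunc ℂ)) else 0)
            - (if e = b i ∧ y = a i then (1:(RatFunc ℂ)) else 0)) * x y := by
          refine Finset.sum_congr rfl fun y _ => ?_
          rw [hEKentry, Finset.sum_mul]
      _ = ∑ i : Fin c, ∑ y, ((if e = a i ∧ y = b i then (1:(RatFunc ℂ)) else 0) * x y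
            - (if e = b i ∧ y = a i then (1:(RatFunc ℂ)) else 0) * x y) := by
          rw [Finset.sum_comm]
          exact Finset.sum_congr rfl fun y _ =>
            Finset.sum_congr rfl fun i _ => by rw [sub_mul]
      _ = ∑ i : Fin c,
            ((if e = a i then x (b i) else 0) - (if e = b i then x (a i) else 0)) := by
          refine Finset.sum_congr rfl fun i _ => ?_
          rw [Finset.sum_sub_distrib]
          congr 1
          · by_cases hc1 : e = a i
            · simp [hc1, ite_and, Finset.sum_ite_eq']
            · simp [hc1, ite_and]
          · by_cases hc2 : e = b i
            · simp [hc2, ite_and, Finset.sum_ite_eq']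
            · simp [hc2, ite_and]
  -- special values of mulVec
  have hvala : ∀ (x : Fin m → (RatFunc ℂ)) (i : Fin c), (EK *ᵥ x) (a i) = x (b i) := by
    intro x i
    rw [hEK, Finset.sum_sub_distrib]
    have h1 : (∑ i' : Fin c, if a i = a i' then x (b i') else 0) = x (b i) := by
      rw [Finset.sum_eq_single i]
      · simp
      · intro i' _ hne
        rw [if_neg fun hh => hne (hainj hh).symm]
      · simp
    have h2 : (∑ i' : Fin c, if a i = b i' then x (a i') else 0) = 0 :=
      Finset.sum_eq_zero fun i' _ => if_neg (hane i i')
    rw [h1, h2, sub_zero]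
  have hvalb : ∀ (x : Fin m → (RatFunc ℂ)) (i : Fin c), (EK *ᵥ x) (b i) = -(x (a i)) := by
    intro x i
    rw [hEK, Finset.sum_sub_distrib]
    have h1 : (∑ i' : Fin c, if b i = a i' then x (b i') else 0) = 0 :=
      Finset.sum_eq_zero fun i' _ => if_neg fun hh => hane i' i hh.symm
    have h2 : (∑ i' : Fin c, if b i = b i' then x (a i') else 0) = x (a i) := by
      rw [Finset.sum_eq_single i]
      · simp
      · intro i' _ hne
        rw [if_neg fun hh => hne (hbinj hh).symm]
      · simp
    rw [h1, h2, zero_sub]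
  -- kernel characterization
  have hkerE : ∀ x : Fin m → (RatFunc ℂ),
      EK *ᵥ x = 0 ↔ (∀ j : Fin (c + c), x (ι j) = 0) := by
    intro x
    constructor
    · intro hx j
      refine Fin.addCases (motive := fun j => x (ι j) = 0) ?_ ?_ j
      · intro i
        have := congrFun hx (b i)
        rw [hvalb] at this
        simpa using this
      · intro i
        have := congrFun hx (a i)
        rw [hvala] at this
        simpa using this
    · intro hx
      funext e
      rw [hEK]
      simp only [Pi.zero_apply]
      apply Finset.sum_eq_zero
      intro i _
      have hxa : x (a i) = 0 := hx (Fin.castAdd c i)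
      have hxb : x (b i) = 0 := hx (Fin.addNat i c)
      by_cases h1 : e = a i <;> by_cases h2 : e = b i <;> simp [h1, h2, hxa, hxb]
  have hkerEsub : LinearMap.ker EK.mulVecLin
      = LinearMap.ker (LinearMap.funLeft (RatFunc ℂ) (RatFunc ℂ) ι) := by
    ext x
    rw [LinearMap.mem_ker, LinearMap.mem_ker, mulVecLin_apply]
    rw [hkerE]
    constructor
    · intro hx
      funext j
      simpa [LinearMap.funLeft_apply] using hx j
    · intro hx j
      have := congrFun hx j
      simpa [LinearMap.funLeft_apply] using this
  have hkfE : finrank (RatFunc ℂ) (LinearMap.ker EK.mulVecLin) + (c + c) = m := by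
    rw [hkerEsub]
    have hrn := LinearMap.finrank_range_add_finrank_ker (LinearMap.funLeft (RatFunc ℂ) (RatFunc ℂ) ι)
    have hrt : LinearMap.range (LinearMap.funLeft (RatFunc ℂ) (RatFunc ℂ) ι) = ⊤ :=
      LinearMap.range_eq_top.mpr (LinearMap.funLeft_surjective_of_injective (RatFunc ℂ) (RatFunc ℂ) ι hι)
    rw [hrt, finrank_top, hV] at hrn
    have hV2 : finrank (RatFunc ℂ) (Fin (c + c) → (RatFunc ℂ)) = c + c := by
      rw [Module.finrank_pi, Fintype.card_fin]
    omega
  -- range support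
  have hsupp : ∀ v ∈ LinearMap.range EK.mulVecLin,
      ∀ e, (∀ j, e ≠ ι j) → v e = 0 := by
    rintro v ⟨x, rfl⟩ e he
    rw [mulVecLin_apply, hEK]
    apply Finset.sum_eq_zero
    intro i _
    rw [if_neg (he (Fin.castAdd c i)), if_neg (he (Fin.addNat i c)), sub_zero]
  -- disjointness of ranges
  have hdisj : LinearMap.range A.mulVecLin ⊓ LinearMap.range EK.mulVecLin = ⊥ := by
    rw [eq_bot_iff]
    rintro v ⟨hvA, hvE⟩
    rw [Submodule.mem_bot]
    have hrep := supported_eq_sum ι hι v (hsupp v hvE)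
    have hq : (LinearMap.range A.mulVecLin).mkQ v = 0 := by
      rw [Submodule.mkQ_apply, Submodule.Quotient.mk_eq_zero]
      exact hvA
    rw [hrep, map_sum] at hq
    simp_rw [_root_.map_smul] at hq
    have hcoef := Fintype.linearIndependent_iff.mp hindep (fun j => v (ι j)) hq
    rw [hrep]
    refine Finset.sum_eq_zero fun j _ => ?_
    have hcj : v (ι j) = 0 := hcoef j
    rw [hcj, zero_smul]
  -- kernel of A + z • EK
  have hker_add : ∀ z : (RatFunc ℂ), z ≠ 0 →
      LinearMap.ker (A + z • EK).mulVecLin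
        = LinearMap.ker A.mulVecLin ⊓ LinearMap.ker EK.mulVecLin := by
    intro z hz
    ext x
    simp only [LinearMap.mem_ker, Submodule.mem_inf, mulVecLin_apply]
    constructor
    · intro hx
      have hx' : A *ᵥ x + z • (EK *ᵥ x) = 0 := by
        rw [← smul_mulVec, ← add_mulVec]
        exact hx
      have hAx : A *ᵥ x = -(z • (EK *ᵥ x)) := eq_neg_of_add_eq_zero_left hx'
      have hmem : A *ᵥ x ∈ LinearMap.range A.mulVecLin ⊓ LinearMap.range EK.mulVecLin := by
        constructor
        · exact ⟨x, by rw [mulVecLin_apply]⟩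
        · refine ⟨-(z • x), ?_⟩
          rw [mulVecLin_apply, mulVec_neg, mulVec_smul, hAx]
      rw [hdisj, Submodule.mem_bot] at hmem
      rw [hmem] at hAx
      have hE0' : z • (EK *ᵥ x) = 0 := neg_eq_zero.mp hAx.symm
      have hE' : EK *ᵥ x = 0 := by
        rcases smul_eq_zero.mp hE0' with h | h
        · exact absurd h hz
        · exact h
      exact ⟨hmem, hE'⟩
    · rintro ⟨h1, h2⟩
      rw [add_mulVec, h1, smul_mulVec, h2, smul_zero, add_zero]
  -- sup of kernels is everything
  have hsup : LinearMap.ker A.mulVecLin ⊔ LinearMap.ker EK.mulVecLin = ⊤ := by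
    set Φ := ((Pi.basisFun (RatFunc ℂ) (Fin m)).toDualEquiv :
      (Fin m → RatFunc ℂ) ≃ₗ[RatFunc ℂ] Module.Dual (RatFunc ℂ) (Fin m → RatFunc ℂ))
      with hΦdef
    have e1 := skew_ker_eq_comap A hAskew
    have e2 := skew_ker_eq_comap EK hEKskew
    have hrΦ : LinearMap.range Φ.toLinearMap = ⊤ :=
      LinearMap.range_eq_top.mpr Φ.surjective
    have hmap : Submodule.map Φ.toLinearMap
        (LinearMap.ker A.mulVecLin ⊔ LinearMap.ker EK.mulVecLin) = ⊤ := by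
      rw [Submodule.map_sup, e1, e2, Submodule.map_comap_eq, Submodule.map_comap_eq,
        hrΦ, top_inf_eq, top_inf_eq, ← Subspace.dualAnnihilator_inf_eq, hdisj,
        Submodule.dualAnnihilator_bot]
    have htop : Submodule.map Φ.toLinearMap ⊤ = ⊤ := by
      rw [Submodule.map_top, hrΦ]
    exact Submodule.map_injective_of_injective Φ.injective (hmap.trans htop.symm)
  -- the key rank identity
  have key : ∀ z : RatFunc ℂ, z ≠ 0 → (A + z • EK).rank = 2 * r := by
    intro z hz
    have h1 := Submodule.finrank_sup_add_finrank_inf_eq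
      (LinearMap.ker A.mulVecLin) (LinearMap.ker EK.mulVecLin)
    rw [hsup, finrank_top, hV] at h1
    have h2 := LinearMap.finrank_range_add_finrank_ker (A + z • EK).mulVecLin
    rw [hker_add z hz, hV] at h2
    have h3 := LinearMap.finrank_range_add_finrank_ker A.mulVecLin
    rw [hA_rk, hV] at h3
    have h4 : (A + z • EK).rank
        = finrank (RatFunc ℂ) (LinearMap.range (A + z • EK).mulVecLin) := rfl
    omega
  -- the approximating sequence
  set ε : ℕ → ℂ := fun k => ((k : ℂ) + 1)⁻¹ with hεdef
  have hεne : ∀ k, ε k ≠ 0 := by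
    intro k
    apply inv_ne_zero
    have : ((k : ℂ) + 1) = ((k + 1 : ℕ) : ℂ) := by push_cast; ring
    rw [this]
    exact Nat.cast_ne_zero.mpr (Nat.succ_ne_zero k)
  set Eext : Fin (d + 1) → Mat m := fun i => if i = 0 then E0 else 0 with hEextdef
  refine ⟨fun k => fun i => Q i + ε k • Eext i, ?_, ?_, ?_⟩
  · -- skewness
    intro k i
    have hEt : (Eext i)ᵀ = -(Eext i) := by
      by_cases h : i = 0 <;> simp [hEextdef, h, hE0skew]
    rw [transpose_add, transpose_smul, hQss i, hEt, smul_neg, ← neg_add]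
  · -- rank
    intro k
    have hPmat : polyRatMat (fun i => Q i + ε k • Eext i)
        = A + (algebraMap ℂ (RatFunc ℂ) (ε k)) • EK := by
      ext x y
      show (∑ j : Fin (d + 1),
          algebraMap ℂ (RatFunc ℂ) ((Q j + ε k • Eext j) x y) * RatFunc.X ^ (j : ℕ))
        = (A + (algebraMap ℂ (RatFunc ℂ) (ε k)) • EK) x y
      have hsplit : ∀ j : Fin (d + 1),
          algebraMap ℂ (RatFunc ℂ) ((Q j + ε k • Eext j) x y) * RatFunc.X ^ (j : ℕ)
          = algebraMap ℂ (RatFunc ℂ) (Q j x y) * RatFunc.X ^ (j : ℕ)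
            + algebraMap ℂ (RatFunc ℂ) ((ε k • Eext j) x y) * RatFunc.X ^ (j : ℕ) := by
        intro j
        rw [Matrix.add_apply, map_add, add_mul]
      rw [Finset.sum_congr rfl fun j _ => hsplit j, Finset.sum_add_distrib]
      have hone : ∀ j : Fin (d + 1),
          algebraMap ℂ (RatFunc ℂ) ((ε k • Eext j) x y) * RatFunc.X ^ (j : ℕ)
          = if j = 0 then algebraMap ℂ (RatFunc ℂ) (ε k) * EK x y else 0 := by
        intro j
        by_cases hj : j = 0
        · subst hj
          simp [hEextdef, Matrix.smul_apply, smul_eq_mul, _root_.map_mul, hEKdef,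
            Matrix.map_apply]
        · simp [hEextdef, hj]
      rw [Finset.sum_congr rfl fun j _ => hone j,
        Finset.sum_ite_eq' Finset.univ (0 : Fin (d + 1))]
      simp only [Finset.mem_univ, if_true, Matrix.add_apply, Matrix.smul_apply,
        smul_eq_mul]
      rfl
    show polyRank (fun i => Q i + ε k • Eext i) = 2 * r
    have : polyRank (fun i => Q i + ε k • Eext i)
        = (A + (algebraMap ℂ (RatFunc ℂ) (ε k)) • EK).rank := by
      rw [polyRank, hPmat]
    rw [this]
    apply key
    intro hcontra
    exact hεne k ((algebraMap ℂ (RatFunc ℂ)).injective (by rw [hcontra, map_zero]))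
  · -- convergence
    have h1 : Filter.Tendsto ε Filter.atTop (nhds 0) := by
      have h2 : Filter.Tendsto (fun k : ℕ => ((k : ℝ) + 1)⁻¹) Filter.atTop (nhds 0) := by
        simpa only [one_div] using tendsto_one_div_add_atTop_nhds_zero_nat (𝕜 := ℝ)
      have h3 := (Complex.continuous_ofReal.tendsto 0).comp h2
      rw [Complex.ofReal_zero] at h3
      refine h3.congr fun k => ?_
      simp only [Function.comp_apply, hεdef]
      push_cast
      ring
    have h5 : Filter.Tendsto (fun k => ε k • Eext) Filter.atTop
        (nhds (0 : Fin (d + 1) → Mat m)) := by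
      have := h1.smul_const Eext
      simpa using this
    have h6 := (tendsto_const_nhds (x := Q) (f := Filter.atTop (α := ℕ))).add h5
    rw [add_zero] at h6
    exact h6

end
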